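/- Let K be a simplicial complex on [n], and let f and f' be two generic bases of ℝ^n. Then Δ^p(K) computed with respect to f equals Δ^p(K) computed with respect to f'. -/

import Mathlib

open scoped BigOperators

section Defs

variable {α : Type*}

/-- A family of finite sets is a simplicial complex if it is closed under taking subsets. -/
def IsComplex (K : Finset (Finset α)) : Prop :=
  ∀ σ ∈ K, ∀ τ ⊆ σ, τ ∈ K

/-- `K` is pure with all facets of cardinality `d` (i.e. pure `(d-1)`-dimensional). -/
def PureCx (d : ℕ) (K : Finset (Finset α)) : Prop :=
  (∀ σ ∈ K, σ.card ≤ d) ∧ ∀ σ ∈ K, ∃ τ ∈ K, σ ⊆ τ ∧ τ.card = d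

/-- `K` is `(d-1)`-dimensional: the largest faces have `d` elements. -/
def DimPred (d : ℕ) (K : Finset (Finset α)) : Prop :=
  (∀ σ ∈ K, σ.card ≤ d) ∧ ∃ σ ∈ K, σ.card = d

/-- The increasing embedding of `Fin (d-1)` into `Fin d` skipping `r`. -/
def skipF {d : ℕ} (r : Fin d) (k : Fin (d - 1)) : Fin d :=
  if (k : ℕ) < (r : ℕ) then ⟨(k : ℕ), by have := k.isLt; omega⟩
  else ⟨(k : ℕ) + 1, by have := k.isLt; omega⟩

/-- The cofactor `C_{r,c}(M)` (0-indexed). -/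
noncomputable def cofactor {d : ℕ} (M : Matrix (Fin d) (Fin d) ℝ) (r c : Fin d) : ℝ :=
  (-1 : ℝ) ^ ((r : ℕ) + (c : ℕ)) * (M.submatrix (skipF r) (skipF c)).det

/-- The matrix `M_{p,σ}` whose `j`-th column is `(p(v_j), 1)`, `v_j` the `j`-th smallest
element of `σ`. -/
noncomputable def faceMat [LinearOrder α] (d : ℕ) (p : α → Fin (d - 1) → ℝ)
    (σ : Finset α) (hσ : σ.card = d) : Matrix (Fin d) (Fin d) ℝ :=
  fun i j => if h : (i : ℕ) < d - 1 then p (σ.orderEmbOfFin hσ j) ⟨i, h⟩ else 1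

/-- The volume-rigidity matrix `𝔙(K,p)`. -/
noncomputable def volMatrix [LinearOrder α] (d : ℕ) (K : Finset (Finset α))
    (p : α → Fin (d - 1) → ℝ) :
    Matrix (α × Fin (d - 1)) {σ : Finset α // σ ∈ K ∧ σ.card = d} ℝ :=
  fun vi σ =>
    if h : vi.1 ∈ σ.1 then
      cofactor (faceMat d p σ.1 σ.2.2) (Fin.castLE (Nat.sub_le d 1) vi.2)
        ((σ.1.orderIsoOfFin σ.2.2).symm ⟨vi.1, h⟩)
    else 0

/-- `p : V → ℝ^{d-1}` is generic: its coordinates are algebraically independent over `ℚ`. -/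
def GenericEmb (d : ℕ) (V : Finset α) (p : α → Fin (d - 1) → ℝ) : Prop :=
  AlgebraicIndependent ℚ (fun x : {a // a ∈ V} × Fin (d - 1) => p x.1.1 x.2)

/-- `K`, with vertex set `V`, is volume-rigid. -/
def VolumeRigid [Fintype α] [LinearOrder α] (d : ℕ) (V : Finset α)
    (K : Finset (Finset α)) : Prop :=
  ∀ p : α → Fin (d - 1) → ℝ, GenericEmb d V p →
    (volMatrix d K p).rank = (d - 1) * V.card - (d ^ 2 - d - 1)

/-- `sign(τ,σ) = (-1)^j` where the unique element of `σ \ τ` is the `j`-th smallest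
element of `σ` (1-based). -/
def faceSgn [LinearOrder α] (τ σ : Finset α) : ℤ :=
  if h : (σ \ τ).card = 1 then
    (-1 : ℤ) ^
      (((σ.sort (· ≤ ·)).idxOf ((σ \ τ).min' (Finset.card_pos.mp (by omega)))) + 1)
  else 0

/-- The boundary of the integral `(d-1)`-chain `z` of `K` vanishes. -/
def BoundaryZeroZ [LinearOrder α] (d : ℕ) (K : Finset (Finset α)) (z : Finset α → ℤ) : Prop :=
  ∀ τ : Finset α, τ.card = d - 1 →
    ∑ σ ∈ K.filter (fun σ => σ.card = d ∧ τ ⊆ σ), faceSgn τ σ * z σ = 0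

/-- The boundary of the real `(d-1)`-chain `z` of `K` vanishes. -/
def BoundaryZeroR [LinearOrder α] (d : ℕ) (K : Finset (Finset α)) (z : Finset α → ℝ) : Prop :=
  ∀ τ : Finset α, τ.card = d - 1 →
    ∑ σ ∈ K.filter (fun σ => σ.card = d ∧ τ ⊆ σ), (faceSgn τ σ : ℝ) * z σ = 0

/-- `K` is a minimal cycle over `ℤ`. -/
def IsMinimalCycleZ [LinearOrder α] (d : ℕ) (K : Finset (Finset α)) : Prop :=
  (∃ z : Finset α → ℤ, (∀ σ, ¬(σ ∈ K ∧ σ.card = d) → z σ = 0) ∧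
      BoundaryZeroZ d K z ∧ ∀ σ ∈ K, σ.card = d → z σ ≠ 0) ∧
  ∀ z : Finset α → ℤ, (∀ σ, ¬(σ ∈ K ∧ σ.card = d) → z σ = 0) →
    BoundaryZeroZ d K z → z ≠ 0 → ∀ σ ∈ K, σ.card = d → z σ ≠ 0

/-- `K` is `(d-1, d²-d-1)`-sparse on vertex set `V`. -/
def Sparse [DecidableEq α] (d : ℕ) (V : Finset α) (K : Finset (Finset α)) : Prop :=
  ∀ A ⊆ V, d ≤ A.card →
    (K.filter (fun σ => σ.card = d ∧ σ ⊆ A)).card ≤ (d - 1) * A.card - (d ^ 2 - d - 1)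

/-- `K` is `(d-1, d²-d-1)`-tight on vertex set `V`. -/
def Tight [DecidableEq α] (d : ℕ) (V : Finset α) (K : Finset (Finset α)) : Prop :=
  Sparse d V K ∧
    (K.filter (fun σ => σ.card = d)).card = (d - 1) * V.card - (d ^ 2 - d - 1)

end Defs

section Shifting

/-- The partial order `σ ≤_p τ`: equal cardinalities and the `i`-th smallest element of `σ`
is at most the `i`-th smallest element of `τ`, for every `i`. -/
def pLE {n : ℕ} (σ τ : Finset (Fin n)) : Prop :=
  List.Forall₂ (· ≤ ·) (σ.sort (· ≤ ·)) (τ.sort (· ≤ ·))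

/-- The strict partial order `σ <_p τ`. -/
def pLT {n : ℕ} (σ τ : Finset (Fin n)) : Prop := pLE σ τ ∧ σ ≠ τ

/-- `f_σ = f_{σ_1} ∧ ⋯ ∧ f_{σ_k}` in the exterior algebra of `ℝ^n`. -/
noncomputable def extWedge {n : ℕ} (f : Fin n → (Fin n → ℝ)) (σ : Finset (Fin n)) :
    ExteriorAlgebra ℝ (Fin n → ℝ) :=
  ((σ.sort (· ≤ ·)).map (fun i => ExteriorAlgebra.ι ℝ (f i))).prod

/-- The standard basis of `ℝ^n`. -/
noncomputable def stdVec (n : ℕ) : Fin n → (Fin n → ℝ) := fun i => Pi.single i 1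

/-- The subspace spanned by `{e_τ : τ ∉ K, |τ| = k}`. -/
noncomputable def faceIdeal {n : ℕ} (K : Finset (Finset (Fin n))) (k : ℕ) :
    Submodule ℝ (ExteriorAlgebra ℝ (Fin n → ℝ)) :=
  Submodule.span ℝ
    {x | ∃ τ : Finset (Fin n), τ ∉ K ∧ τ.card = k ∧ x = extWedge (stdVec n) τ}

/-- The quotient map `q`. -/
noncomputable def qMap {n : ℕ} (K : Finset (Finset (Fin n))) (k : ℕ) :
    ExteriorAlgebra ℝ (Fin n → ℝ) → ExteriorAlgebra ℝ (Fin n → ℝ) ⧸ faceIdeal K k :=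
  fun x => Submodule.Quotient.mk x

/-- The shifted family `Δ^<(K)` associated with a strict order `lt` on subsets of `[n]`,
computed with respect to the basis `f`. -/
def DeltaLt {n : ℕ} (K : Finset (Finset (Fin n))) (f : Fin n → (Fin n → ℝ))
    (lt : Finset (Fin n) → Finset (Fin n) → Prop) : Set (Finset (Fin n)) :=
  {σ | qMap K σ.card (extWedge f σ) ∉
    Submodule.span ℝ (qMap K σ.card '' (extWedge f '' {τ | lt τ σ ∧ τ.card = σ.card}))}

/-- `Δ^p(K)`, computed with respect to the basis `f`. -/
def DeltaP {n : ℕ} (K : Finset (Finset (Fin n))) (f : Fin n → (Fin n → ℝ)) :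
    Set (Finset (Fin n)) := DeltaLt K f pLT

/-- `f` is a generic basis of `ℝ^n`: it is a basis, `f_1 = (1,…,1)`, and the coordinates of
`f_2, …, f_n` are algebraically independent over `ℚ`. -/
def GenericBasis {n : ℕ} (f : Fin n → (Fin n → ℝ)) : Prop :=
  (∃ b : Module.Basis (Fin n) ℝ (Fin n → ℝ), ⇑b = f) ∧
  (∀ i : Fin n, (i : ℕ) = 0 → f i = 1) ∧
  AlgebraicIndependent ℚ (fun x : {i : Fin n // (i : ℕ) ≠ 0} × Fin n => f x.1.1 x.2)

/-- The set `{1,3,4,…,d,n}` (1-based), i.e. `{0,2,3,…,d-1,n-1}` as a subset of `Fin n`. -/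
def sigma0 (d n : ℕ) : Finset (Fin n) :=
  Finset.univ.filter (fun i : Fin n =>
    (i : ℕ) = 0 ∨ (2 ≤ (i : ℕ) ∧ (i : ℕ) + 1 ≤ d) ∨ (i : ℕ) + 1 = n)

end Shifting

theorem extWedge_eq_iotaMulti {n : ℕ} (f : Fin n → (Fin n → ℝ)) (σ : Finset (Fin n)) :
    extWedge f σ = ExteriorAlgebra.ιMulti ℝ σ.card
      (fun i => f (σ.orderEmbOfFin rfl i)) := by
  rw [ExteriorAlgebra.ιMulti_apply, extWedge]
  congr 1
  have h1 : σ.sort (· ≤ ·) = List.ofFn (fun i => σ.orderEmbOfFin rfl i) := by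
    apply List.ext_getElem
    · simp [Finset.length_sort]
    · intro i h1 h2
      simp [Finset.orderEmbOfFin_apply]
  rw [h1, List.map_ofFn]
  rfl

theorem extWedge_eq_iotaMulti' {n : ℕ} (f : Fin n → (Fin n → ℝ)) (σ : Finset (Fin n))
    {k : ℕ} (h : σ.card = k) :
    extWedge f σ = ExteriorAlgebra.ιMulti ℝ k (fun i => f (σ.orderEmbOfFin h i)) := by
  subst h; exact extWedge_eq_iotaMulti f σ

/-- The permutation comparing an injective `r` with the increasing enumeration of its image. -/
noncomputable def permOf {n k : ℕ} (ρ : Finset (Fin n)) (h : ρ.card = k)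
    (r : Fin k → Fin n) (hr : ∀ i, r i ∈ ρ) (hinj : Function.Injective r) :
    Equiv.Perm (Fin k) :=
  Equiv.ofBijective (fun i => (ρ.orderIsoOfFin h).symm ⟨r i, hr i⟩)
    (Finite.injective_iff_bijective.mp (by
      intro a b hab
      apply hinj
      have := (ρ.orderIsoOfFin h).symm.injective hab
      exact congrArg Subtype.val this))

theorem permOf_spec {n k : ℕ} (ρ : Finset (Fin n)) (h : ρ.card = k)
    (r : Fin k → Fin n) (hr : ∀ i, r i ∈ ρ) (hinj : Function.Injective r) (i : Fin k) :
    ρ.orderEmbOfFin h (permOf ρ h r hr hinj i) = r i := by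
  have : (ρ.orderIsoOfFin h) ((ρ.orderIsoOfFin h).symm ⟨r i, hr i⟩) = ⟨r i, hr i⟩ :=
    (ρ.orderIsoOfFin h).apply_symm_apply _
  have h2 := congrArg Subtype.val this
  rw [← Finset.coe_orderIsoOfFin_apply]
  exact h2

noncomputable def sgnr {n k : ℕ} (ρ : Finset (Fin n)) (r : Fin k → Fin n) : ℤ :=
  if h : Function.Injective r ∧ (∀ i, r i ∈ ρ) ∧ ρ.card = k then
    Equiv.Perm.sign (permOf ρ h.2.2 r h.2.1 h.1) else 0

noncomputable def coefC {R : Type*} [CommRing R] {n k : ℕ} (v : Fin k → Fin n → R)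
    (ρ : Finset (Fin n)) : R :=
  ∑ r : Fin k → Fin n, (sgnr ρ r : R) * ∏ i, v i (r i)

theorem stdVec_apply {n : ℕ} (j j' : Fin n) :
    stdVec n j j' = if j = j' then 1 else 0 := by
  simp [stdVec, Pi.single_apply, eq_comm]

theorem iotaMulti_std {n k : ℕ} (r : Fin k → Fin n) :
    ExteriorAlgebra.ιMulti ℝ k (fun i => stdVec n (r i)) =
      ∑ ρ ∈ Finset.powersetCard k (Finset.univ : Finset (Fin n)),
        (sgnr ρ r : ℝ) • extWedge (stdVec n) ρ := by
  by_cases hinj : Function.Injective r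
  · -- image
    set ρr : Finset (Fin n) := Finset.image r Finset.univ with hρr
    have hcard : ρr.card = k := by
      rw [hρr, Finset.card_image_of_injective _ hinj, Finset.card_univ, Fintype.card_fin]
    have hmem : ρr ∈ Finset.powersetCard k (Finset.univ : Finset (Fin n)) := by
      rw [Finset.mem_powersetCard]
      exact ⟨Finset.subset_univ _, hcard⟩
    have hr : ∀ i, r i ∈ ρr := fun i => Finset.mem_image_of_mem r (Finset.mem_univ i)
    rw [Finset.sum_eq_single ρr]
    · have hsgn : sgnr ρr r = Equiv.Perm.sign (permOf ρr hcard r hr hinj) := by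
        rw [sgnr, dif_pos ⟨hinj, hr, hcard⟩]
      rw [hsgn]
      have hcomp : (fun i => stdVec n (r i)) =
          (fun i => stdVec n (ρr.orderEmbOfFin hcard i)) ∘ (permOf ρr hcard r hr hinj) := by
        funext i
        simp only [Function.comp_apply, permOf_spec]
      rw [hcomp, AlternatingMap.map_perm, extWedge_eq_iotaMulti' (stdVec n) ρr hcard,
        Int.cast_smul_eq_zsmul, Units.smul_def]
    · intro ρ hρ hne
      have : sgnr ρ r = 0 := by
        rw [sgnr, dif_neg]
        rintro ⟨h1, h2, h3⟩
        apply hne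
        refine (Finset.eq_of_subset_of_card_le ?_ ?_).symm
        · intro x hx
          rw [hρr] at hx
          obtain ⟨i, _, rfl⟩ := Finset.mem_image.mp hx
          exact h2 i
        · rw [hcard, h3]
      simp [this]
    · intro h; exact absurd hmem h
  · have h0 : ExteriorAlgebra.ιMulti ℝ k (fun i => stdVec n (r i)) = 0 := by
      apply AlternatingMap.map_eq_zero_of_not_injective
      intro hc
      apply hinj
      intro a b hab
      exact hc (show stdVec n (r a) = stdVec n (r b) by rw [hab])
    rw [h0]
    apply Eq.symm
    apply Finset.sum_eq_zero
    intro ρ _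
    have : sgnr ρ r = 0 := by
      rw [sgnr, dif_neg]; rintro ⟨h1, _, _⟩; exact hinj h1
    simp [this]

theorem iotaMulti_expand {n k : ℕ} (v : Fin k → Fin n → ℝ) :
    ExteriorAlgebra.ιMulti ℝ k v =
      ∑ ρ ∈ Finset.powersetCard k (Finset.univ : Finset (Fin n)),
        coefC v ρ • extWedge (stdVec n) ρ := by
  have hv : v = fun i => ∑ j, v i j • stdVec n j := by
    funext i j'
    simp only [Finset.sum_apply, Pi.smul_apply, stdVec_apply, smul_eq_mul, mul_ite, mul_one,
      mul_zero]
    rw [Finset.sum_ite_eq' Finset.univ j' (fun j => v i j)]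
    simp
  conv_lhs => rw [hv]
  rw [show (ExteriorAlgebra.ιMulti ℝ k (fun i => ∑ j, v i j • stdVec n j) :
      ExteriorAlgebra ℝ (Fin n → ℝ)) =
      (ExteriorAlgebra.ιMulti ℝ k).toMultilinearMap (fun i => ∑ j, v i j • stdVec n j) from rfl,
    MultilinearMap.map_sum]
  have step : ∀ r : Fin k → Fin n,
      (ExteriorAlgebra.ιMulti ℝ k).toMultilinearMap (fun i => v i (r i) • stdVec n (r i)) =
      ∑ ρ ∈ Finset.powersetCard k (Finset.univ : Finset (Fin n)),
        ((sgnr ρ r : ℝ) * ∏ i, v i (r i)) • extWedge (stdVec n) ρ := by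
    intro r
    rw [MultilinearMap.map_smul_univ]
    rw [show ((ExteriorAlgebra.ιMulti ℝ k).toMultilinearMap (fun i => stdVec n (r i)) :
        ExteriorAlgebra ℝ (Fin n → ℝ)) =
        ExteriorAlgebra.ιMulti ℝ k (fun i => stdVec n (r i)) from rfl, iotaMulti_std,
      Finset.smul_sum]
    apply Finset.sum_congr rfl
    intro ρ _
    rw [smul_smul, mul_comm]
  rw [Finset.sum_congr rfl (fun r _ => step r), Finset.sum_comm]
  apply Finset.sum_congr rfl
  intro ρ _
  rw [coefC, Finset.sum_smul]

noncomputable def cVec {R : Type*} [CommRing R] {n : ℕ} (v : Fin n → Fin n → R)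
    (τ : Finset (Fin n)) : Finset (Fin n) → R :=
  fun ρ => coefC (fun i j => v (τ.orderEmbOfFin rfl i) j) ρ

theorem cVec_zero {R : Type*} [CommRing R] {n : ℕ} (v : Fin n → Fin n → R)
    (τ ρ : Finset (Fin n)) (h : ρ.card ≠ τ.card) : cVec v τ ρ = 0 := by
  rw [cVec, coefC]
  apply Finset.sum_eq_zero
  intro r _
  have : sgnr ρ r = 0 := by rw [sgnr, dif_neg]; rintro ⟨_, _, h3⟩; exact h h3
  simp [this]

theorem extWedge_expand {n : ℕ} (f : Fin n → (Fin n → ℝ)) (τ : Finset (Fin n)) :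
    extWedge f τ = ∑ ρ ∈ Finset.powersetCard τ.card (Finset.univ : Finset (Fin n)),
      cVec f τ ρ • extWedge (stdVec n) ρ := by
  rw [extWedge_eq_iotaMulti f τ, iotaMulti_expand]
  rfl

/-- The degree-`k` "determinant in columns `ρ0`" functional on the exterior algebra. -/
noncomputable def detFun {n k : ℕ} (ρ0 : Finset (Fin n)) (h : ρ0.card = k) :
    ExteriorAlgebra ℝ (Fin n → ℝ) →ₗ[ℝ] ℝ :=
  ExteriorAlgebra.liftAlternating (fun j =>
    if hj : j = k then
      ((Matrix.detRowAlternating :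
          (Fin k → ℝ) [⋀^Fin k]→ₗ[ℝ] ℝ).compLinearMap
        (LinearMap.funLeft ℝ ℝ (ρ0.orderEmbOfFin h))).domDomCongr (finCongr hj.symm)
    else 0)

theorem detFun_iotaMulti {n k : ℕ} (ρ0 : Finset (Fin n)) (h : ρ0.card = k)
    (v : Fin k → (Fin n → ℝ)) :
    detFun ρ0 h (ExteriorAlgebra.ιMulti ℝ k v) =
      Matrix.det (Matrix.of (fun i j => v i (ρ0.orderEmbOfFin h j))) := by
  rw [detFun, ExteriorAlgebra.liftAlternating_apply_ιMulti, dif_pos rfl]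
  simp [AlternatingMap.domDomCongr_apply, Matrix.detRowAlternating,
    LinearMap.funLeft, Matrix.of]
  rfl

theorem detFun_eWedge {n k : ℕ} (ρ0 : Finset (Fin n)) (h : ρ0.card = k)
    (ρ : Finset (Fin n)) (hρ : ρ.card = k) :
    detFun ρ0 h (extWedge (stdVec n) ρ) = if ρ = ρ0 then 1 else 0 := by
  rw [extWedge_eq_iotaMulti' (stdVec n) ρ hρ, detFun_iotaMulti]
  by_cases he : ρ = ρ0
  · subst he
    rw [if_pos rfl]
    have : Matrix.of (fun i j => stdVec n (ρ.orderEmbOfFin hρ i) (ρ.orderEmbOfFin h j)) =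
        (1 : Matrix (Fin k) (Fin k) ℝ) := by
      ext i j
      rw [Matrix.of_apply, stdVec_apply, Matrix.one_apply,
        show (ρ.orderEmbOfFin h) = (ρ.orderEmbOfFin hρ) from rfl]
      congr 1
      exact propext (ρ.orderEmbOfFin hρ).injective.eq_iff
    rw [this, Matrix.det_one]
  · rw [if_neg he]
    have hne : ∃ a ∈ ρ, a ∉ ρ0 := by
      by_contra hc
      push_neg at hc
      exact he (Finset.eq_of_subset_of_card_le hc (by rw [h, hρ]))
    obtain ⟨a, ha, ha0⟩ := hne
    have : a ∈ Set.range (ρ.orderEmbOfFin hρ) := by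
      rw [Finset.range_orderEmbOfFin]; exact ha
    obtain ⟨i0, hi0⟩ := this
    apply Matrix.det_eq_zero_of_row_eq_zero i0
    intro j
    rw [Matrix.of_apply, stdVec_apply, if_neg]
    intro hh
    apply ha0
    rw [← hi0, hh]
    exact Finset.orderEmbOfFin_mem ρ0 h j

noncomputable def Xi (n k : ℕ) :
    ExteriorAlgebra ℝ (Fin n → ℝ) →ₗ[ℝ] (Finset (Fin n) → ℝ) :=
  LinearMap.pi (fun ρ0 => if h : ρ0.card = k then detFun ρ0 h else 0)

noncomputable def Theta (n k : ℕ) :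
    (Finset (Fin n) → ℝ) →ₗ[ℝ] ExteriorAlgebra ℝ (Fin n → ℝ) where
  toFun := fun d => ∑ ρ ∈ Finset.powersetCard k (Finset.univ : Finset (Fin n)),
    d ρ • extWedge (stdVec n) ρ
  map_add' := by intro x y; simp [add_smul, Finset.sum_add_distrib]
  map_smul' := by intro c x; simp [smul_smul, Finset.smul_sum]

theorem Xi_extWedge {n k : ℕ} (f : Fin n → (Fin n → ℝ)) (τ : Finset (Fin n))
    (hτ : τ.card = k) : Xi n k (extWedge f τ) = cVec f τ := by
  funext ρ0
  rw [Xi, LinearMap.pi_apply]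
  by_cases h : ρ0.card = k
  · rw [dif_pos h, extWedge_expand, map_sum]
    have : ∀ ρ ∈ Finset.powersetCard τ.card (Finset.univ : Finset (Fin n)),
        detFun ρ0 h (cVec f τ ρ • extWedge (stdVec n) ρ) =
        if ρ = ρ0 then cVec f τ ρ else 0 := by
      intro ρ hρ
      rw [map_smul, smul_eq_mul, detFun_eWedge ρ0 h ρ
        (by rw [(Finset.mem_powersetCard.mp hρ).2, hτ])]
      by_cases he : ρ = ρ0 <;> simp [he]
    rw [Finset.sum_congr rfl this, Finset.sum_ite_eq' _ ρ0]
    rw [if_pos (by rw [Finset.mem_powersetCard]; exact ⟨Finset.subset_univ _, by rw [h, hτ]⟩)]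
  · rw [dif_neg h, LinearMap.zero_apply, cVec_zero]
    rw [hτ]; exact h

theorem Xi_eWedge {n k : ℕ} (ρ : Finset (Fin n)) (hρ : ρ.card = k) :
    Xi n k (extWedge (stdVec n) ρ) = Pi.single ρ (1 : ℝ) := by
  funext ρ0
  rw [Xi, LinearMap.pi_apply]
  by_cases h : ρ0.card = k
  · rw [dif_pos h, detFun_eWedge ρ0 h ρ hρ, Pi.single_apply]
    congr 1
    exact propext ⟨fun hh => hh.symm, fun hh => hh.symm⟩
  · rw [dif_neg h, LinearMap.zero_apply, Pi.single_apply, if_neg]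
    intro hh; subst hh; exact h hρ

theorem Theta_apply {n k : ℕ} (d : Finset (Fin n) → ℝ) :
    Theta n k d = ∑ ρ ∈ Finset.powersetCard k (Finset.univ : Finset (Fin n)),
      d ρ • extWedge (stdVec n) ρ := rfl

theorem Theta_cVec {n k : ℕ} (f : Fin n → (Fin n → ℝ)) (τ : Finset (Fin n))
    (hτ : τ.card = k) : Theta n k (cVec f τ) = extWedge f τ := by
  rw [Theta_apply, extWedge_expand, hτ]

theorem Theta_single {n k : ℕ} (ρ : Finset (Fin n)) (hρ : ρ.card = k) :
    Theta n k (Pi.single ρ (1 : ℝ)) = extWedge (stdVec n) ρ := by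
  rw [Theta_apply, Finset.sum_eq_single ρ]
  · simp
  · intro ρ' _ hne; rw [Pi.single_apply, if_neg hne, zero_smul]
  · intro hmem
    exact absurd (Finset.mem_powersetCard.mpr ⟨Finset.subset_univ _, hρ⟩) hmem

theorem mem_span_coords {n k : ℕ} (f : Fin n → (Fin n → ℝ)) (σ : Finset (Fin n))
    (hσ : σ.card = k) (T : Set (Finset (Fin n))) (hT : ∀ τ ∈ T, τ.card = k)
    (E : Set (Finset (Fin n))) (hE : ∀ ρ ∈ E, ρ.card = k) :
    extWedge f σ ∈ Submodule.span ℝ ((extWedge f '' T) ∪ (extWedge (stdVec n) '' E)) ↔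
    cVec f σ ∈ Submodule.span ℝ
      ((cVec f '' T) ∪ ((fun ρ => Pi.single ρ (1 : ℝ)) '' E)) := by
  constructor
  · intro hx
    have h2 := Submodule.apply_mem_span_image_of_mem_span (Xi n k) hx
    rw [Set.image_union, Set.image_image, Set.image_image] at h2
    rw [Set.image_congr (fun τ hτ => Xi_extWedge f τ (hT τ hτ)),
      Set.image_congr (fun ρ hρ => Xi_eWedge ρ (hE ρ hρ)),
      Xi_extWedge f σ hσ] at h2
    exact h2
  · intro hx
    have h2 := Submodule.apply_mem_span_image_of_mem_span (Theta n k) hx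
    rw [Set.image_union, Set.image_image, Set.image_image] at h2
    rw [Set.image_congr (fun τ hτ => Theta_cVec f τ (hT τ hτ)),
      Set.image_congr (fun ρ hρ => Theta_single ρ (hE ρ hρ)),
      Theta_cVec f σ hσ] at h2
    exact h2

theorem pi_single_expand {F : Type*} [Field F] {β : Type*} [Fintype β] [DecidableEq β]
    (y : β → F) : y = ∑ b, y b • (Pi.single b (1 : F) : β → F) := by
  funext b'
  rw [Finset.sum_apply]
  simp only [Pi.smul_apply, Pi.single_apply, smul_eq_mul, mul_ite, mul_one, mul_zero]
  rw [Finset.sum_ite_eq Finset.univ b' y, if_pos (Finset.mem_univ _)]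

theorem span_descend {F : Type*} [Field F] (φ : F →+* ℝ) {β ι : Type*} [Fintype β]
    [DecidableEq β] (u : ι → (β → F)) (s : Set ι) (x : β → F) :
    x ∈ Submodule.span F (u '' s) ↔
      (fun b => φ (x b)) ∈ Submodule.span ℝ ((fun i => fun b => φ (u i b)) '' s) := by
  constructor
  · intro hx
    induction hx using Submodule.span_induction with
    | mem y hy =>
      obtain ⟨i, hi, rfl⟩ := hy
      exact Submodule.subset_span ⟨i, hi, rfl⟩
    | zero =>
      rw [show (fun b => φ ((0 : β → F) b)) = 0 from by funext b; simp]
      exact Submodule.zero_mem _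
    | add y z _ _ hy hz =>
      rw [show (fun b => φ ((y + z) b)) = (fun b => φ (y b)) + (fun b => φ (z b)) from by
        funext b; simp]
      exact Submodule.add_mem _ hy hz
    | smul a y _ hy =>
      rw [show (fun b => φ ((a • y) b)) = φ a • (fun b => φ (y b)) from by
        funext b; simp [Pi.smul_apply, smul_eq_mul]]
      exact Submodule.smul_mem _ _ hy
  · intro hx
    by_contra hnx
    -- separating functional over F
    set p := Submodule.span F (u '' s) with hp
    have hq : p.mkQ x ≠ 0 := by
      intro h
      exact hnx ((Submodule.Quotient.mk_eq_zero p).mp h)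
    obtain ⟨g, hg⟩ : ∃ g : Module.Dual F ((β → F) ⧸ p), g (p.mkQ x) ≠ 0 := by
      by_contra hc
      push_neg at hc
      exact hq ((Module.forall_dual_apply_eq_zero_iff F _).mp hc)
    set ℓ : (β → F) →ₗ[F] F := g.comp p.mkQ with hℓ
    have hℓp : ∀ y ∈ p, ℓ y = 0 := by
      intro y hy
      simp only [hℓ, LinearMap.comp_apply]
      rw [Submodule.mkQ_apply, (Submodule.Quotient.mk_eq_zero p).mpr hy, map_zero]
    have hℓx : ℓ x ≠ 0 := hg
    set c : β → F := fun b => ℓ (Pi.single b 1) with hc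
    have hℓeq : ∀ y : β → F, ℓ y = ∑ b, y b * c b := by
      intro y
      conv_lhs => rw [pi_single_expand y]
      rw [map_sum]
      apply Finset.sum_congr rfl
      intro b _
      rw [map_smul, smul_eq_mul]
    -- the real functional
    set Lr : (β → ℝ) →ₗ[ℝ] ℝ :=
      { toFun := fun z => ∑ b, φ (c b) * z b
        map_add' := by intro z w; simp [mul_add, Finset.sum_add_distrib]
        map_smul' := by
          intro a z
          simp only [Pi.smul_apply, smul_eq_mul, RingHom.id_apply, Finset.mul_sum]
          apply Finset.sum_congr rfl
          intro b _; ring } with hLr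
    have hker : Submodule.span ℝ ((fun i => fun b => φ (u i b)) '' s) ≤ LinearMap.ker Lr := by
      rw [Submodule.span_le]
      rintro _ ⟨i, hi, rfl⟩
      rw [SetLike.mem_coe, LinearMap.mem_ker]
      show (∑ b, φ (c b) * φ (u i b)) = 0
      have : (∑ b, φ (c b) * φ (u i b)) = φ (ℓ (u i)) := by
        rw [hℓeq, map_sum]
        apply Finset.sum_congr rfl
        intro b _
        rw [map_mul, mul_comm]
      rw [this, hℓp (u i) (Submodule.subset_span ⟨i, hi, rfl⟩), map_zero]
    have h0 : Lr (fun b => φ (x b)) = 0 := LinearMap.mem_ker.mp (hker hx)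
    have h1 : Lr (fun b => φ (x b)) = φ (ℓ x) := by
      show (∑ b, φ (c b) * φ (x b)) = _
      rw [hℓeq, map_sum]
      apply Finset.sum_congr rfl
      intro b _
      rw [map_mul, mul_comm]
    rw [h1] at h0
    exact hℓx (φ.injective (by rw [h0, map_zero]))

theorem quot_mem_iff {n : ℕ} (K : Finset (Finset (Fin n))) (k : ℕ)
    (x : ExteriorAlgebra ℝ (Fin n → ℝ)) (S : Set (ExteriorAlgebra ℝ (Fin n → ℝ))) :
    qMap K k x ∈ Submodule.span ℝ (qMap K k '' S) ↔
      x ∈ Submodule.span ℝ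
        (S ∪ {y | ∃ τ : Finset (Fin n), τ ∉ K ∧ τ.card = k ∧ y = extWedge (stdVec n) τ}) := by
  have hq : qMap K k = ⇑(faceIdeal K k).mkQ := rfl
  rw [hq, ← Submodule.map_span, Submodule.span_union]
  constructor
  · intro hx
    obtain ⟨y, hy, hyx⟩ := Submodule.mem_map.mp hx
    have hxy : x - y ∈ faceIdeal K k := by
      rw [Submodule.mkQ_apply, Submodule.mkQ_apply] at hyx
      exact (Submodule.Quotient.eq _).mp hyx.symm
    rw [Submodule.mem_sup]
    exact ⟨y, hy, x - y, hxy, by abel⟩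
  · intro hx
    rw [Submodule.mem_sup] at hx
    obtain ⟨y, hy, z, hz, rfl⟩ := hx
    apply Submodule.mem_map.mpr
    refine ⟨y, hy, ?_⟩
    rw [Submodule.mkQ_apply, Submodule.mkQ_apply, Submodule.Quotient.eq]
    rw [show y - (y + z) = -z by abel]
    exact Submodule.neg_mem _ hz

theorem cVec_map {F : Type*} [Field F] (φ : F →+* ℝ) {n : ℕ} (v : Fin n → Fin n → F)
    (τ : Finset (Fin n)) :
    (fun ρ => φ (cVec v τ ρ)) = cVec (fun i j => φ (v i j)) τ := by
  funext ρ
  rw [cVec, cVec, coefC, coefC, map_sum]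
  apply Finset.sum_congr rfl
  intro r _
  rw [map_mul, map_intCast, map_prod]

abbrev Fld (n : ℕ) : Type := FractionRing (MvPolynomial ({i : Fin n // (i : ℕ) ≠ 0} × Fin n) ℚ)

noncomputable def genMat (n : ℕ) : Fin n → Fin n → Fld n := fun i j =>
  if h : (i : ℕ) = 0 then 1
  else algebraMap (MvPolynomial ({i : Fin n // (i : ℕ) ≠ 0} × Fin n) ℚ) (Fld n)
    (MvPolynomial.X (⟨i, h⟩, j))

set_option maxHeartbeats 2000000 in
/-- Key lemma: for a generic basis `f`, the span-membership condition is equivalent to a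
condition over the fraction field of the generic polynomial ring, independent of `f`. -/
theorem generic_mem_iff {n : ℕ} (f : Fin n → (Fin n → ℝ)) (hf : GenericBasis f)
    (σ : Finset (Fin n)) (T E : Set (Finset (Fin n)))
    (hT : ∀ τ ∈ T, τ.card = σ.card) (hE : ∀ ρ ∈ E, ρ.card = σ.card) :
    extWedge f σ ∈ Submodule.span ℝ
        ((extWedge f '' T) ∪ (extWedge (stdVec n) '' E)) ↔
      cVec (genMat n) σ ∈ Submodule.span (Fld n)
        ((cVec (genMat n) '' T) ∪ ((fun ρ => Pi.single ρ (1 : Fld n)) '' E)) := by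
  obtain ⟨hb, hone, halg⟩ := hf
  set ψ : MvPolynomial ({i : Fin n // (i : ℕ) ≠ 0} × Fin n) ℚ →ₐ[ℚ] ℝ :=
    MvPolynomial.aeval (fun x => f x.1.1 x.2) with hψ
  have hinj : Function.Injective (ψ : MvPolynomial ({i : Fin n // (i : ℕ) ≠ 0} × Fin n) ℚ →+* ℝ) := by
    have := algebraicIndependent_iff_injective_aeval.mp halg
    exact this
  set φ : Fld n →+* ℝ := IsFractionRing.lift hinj with hφ
  have hφa : ∀ a, φ (algebraMap (MvPolynomial ({i : Fin n // (i : ℕ) ≠ 0} × Fin n) ℚ) (Fld n) a) = ψ a :=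
    fun a => IsFractionRing.lift_algebraMap hinj a
  have hφg : (fun i j => φ (genMat n i j)) = f := by
    funext i j
    by_cases h : (i : ℕ) = 0
    · simp only [genMat, dif_pos h, map_one]
      rw [hone i h]; rfl
    · simp only [genMat, dif_neg h, hφa]
      rw [hψ]
      exact MvPolynomial.aeval_X _ _
  rw [mem_span_coords f σ rfl T hT E hE]
  set u : (Finset (Fin n)) ⊕ (Finset (Fin n)) → (Finset (Fin n) → Fld n) :=
    Sum.elim (cVec (genMat n)) (fun ρ => Pi.single ρ (1 : Fld n)) with hu
  set s : Set ((Finset (Fin n)) ⊕ (Finset (Fin n))) := (Sum.inl '' T) ∪ (Sum.inr '' E)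
    with hs
  have husT : u '' s = (cVec (genMat n) '' T) ∪ ((fun ρ => Pi.single ρ (1 : Fld n)) '' E) := by
    rw [hs, Set.image_union, Set.image_image, Set.image_image]
    rfl
  have hsingle : ∀ ρ : Finset (Fin n),
      (fun b => φ ((Pi.single ρ (1 : Fld n) : Finset (Fin n) → Fld n) b)) = Pi.single ρ (1 : ℝ) := by
    intro ρ
    funext b
    rw [Pi.single_apply, Pi.single_apply, apply_ite φ, map_one, map_zero]
  have hcomp : (fun i => fun b => φ (u i b)) =
      Sum.elim (cVec f) (fun ρ => Pi.single ρ (1 : ℝ)) := by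
    funext i
    cases i with
    | inl τ =>
      rw [Sum.elim_inl, show (fun b => φ (u (Sum.inl τ) b)) =
        (fun b => φ (cVec (genMat n) τ b)) from rfl, cVec_map φ (genMat n) τ, hφg]
    | inr ρ =>
      rw [Sum.elim_inr, show (fun b => φ (u (Sum.inr ρ) b)) =
        (fun b => φ ((Pi.single ρ (1 : Fld n) : Finset (Fin n) → Fld n) b)) from rfl, hsingle]
  have hmap : (fun i => fun b => φ (u i b)) '' s =
      (cVec f '' T) ∪ ((fun ρ => Pi.single ρ (1 : ℝ)) '' E) := by
    rw [hcomp, hs, Set.image_union, Set.image_image, Set.image_image]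
    rfl
  have hx : (fun b => φ (cVec (genMat n) σ b)) = cVec f σ := by
    rw [cVec_map φ (genMat n) σ, hφg]
  rw [← hmap, ← hx, ← husT]
  exact (span_descend φ u s (cVec (genMat n) σ)).symm

theorem deltaP_mem_iff {n : ℕ} (K : Finset (Finset (Fin n))) (f : Fin n → (Fin n → ℝ))
    (σ : Finset (Fin n)) :
    σ ∈ DeltaP K f ↔
      ¬(extWedge f σ ∈ Submodule.span ℝ
        ((extWedge f '' {τ | pLT τ σ ∧ τ.card = σ.card}) ∪
          (extWedge (stdVec n) '' {τ | τ ∉ K ∧ τ.card = σ.card}))) := by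
  rw [DeltaP, DeltaLt, Set.mem_setOf_eq]
  apply not_congr
  rw [quot_mem_iff K σ.card (extWedge f σ) (extWedge f '' {τ | pLT τ σ ∧ τ.card = σ.card})]
  have : {y | ∃ τ : Finset (Fin n), τ ∉ K ∧ τ.card = σ.card ∧ y = extWedge (stdVec n) τ} =
      extWedge (stdVec n) '' {τ | τ ∉ K ∧ τ.card = σ.card} := by
    ext y
    constructor
    · rintro ⟨τ, h1, h2, rfl⟩; exact ⟨τ, ⟨h1, h2⟩, rfl⟩
    · rintro ⟨τ, ⟨h1, h2⟩, rfl⟩; exact ⟨τ, h1, h2, rfl⟩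
  rw [this]

theorem DeltaP_independent_of_genericBasis' (n : ℕ) (K : Finset (Finset (Fin n)))
    (f f' : Fin n → (Fin n → ℝ))
    (hf : GenericBasis f) (hf' : GenericBasis f') :
    DeltaP K f = DeltaP K f' := by
  ext σ
  rw [deltaP_mem_iff, deltaP_mem_iff]
  apply not_congr
  rw [generic_mem_iff f hf σ _ _ (fun τ hτ => hτ.2) (fun ρ hρ => hρ.2),
    generic_mem_iff f' hf' σ _ _ (fun τ hτ => hτ.2) (fun ρ hρ => hρ.2)]

/-- part of Corollary 2.3: `Δ^p(K)` does not depend on the choice of the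
generic basis. -/
theorem DeltaP_independent_of_genericBasis (n : ℕ) (K : Finset (Finset (Fin n)))
    (hK : IsComplex K) (f f' : Fin n → (Fin n → ℝ))
    (hf : GenericBasis f) (hf' : GenericBasis f') :
    DeltaP K f = DeltaP K f' :=
  DeltaP_independent_of_genericBasis' n K f f' hf hf'
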